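/- With G = L F_X² and A = hF_X + kF as in the paper's example (h = (L_X(F_X+F_Y))/2 + L F_XY, k = -F_X - (L_X F_XY)/2), at any point P with F(P) = 0 and F_X(P) = 0 one has A_Y(P) = L(P)·F_XY(P)², G_YY(P)/2 = L(P)·F_XY(P)², and G_Y(P) = 0; hence A_Y(P) = G_YY(P)/2 + F_YY(P)G_Y(P)/(2F_Y(P)) provided F_Y(P) ≠ 0. -/

import Mathlib

open MvPolynomial

noncomputable section

abbrev P2 : Type := MvPolynomial (Fin 2) ℂ

noncomputable def dX (f : P2) : P2 := pderiv 0 f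
noncomputable def dY (f : P2) : P2 := pderiv 1 f

noncomputable def hpol (L F : P2) : P2 :=
  C ((1:ℂ)/2) * dX L * (dX F + dY F) + L * dY (dX F)

noncomputable def kpol (L F : P2) : P2 :=
  - dX F - C ((1:ℂ)/2) * dX L * dY (dX F)

noncomputable def hpol' (L F : P2) : P2 :=
  - dX L * dX F - L * dX (dX F)

noncomputable def kpol' (L F : P2) : P2 :=
  dX F + C ((1:ℂ)/2) * dX L * dX (dX F)

noncomputable def Apol (L F : P2) : P2 := hpol L F * dX F + kpol L F * F

noncomputable def Bpol (L F : P2) : P2 := hpol' L F * dX F + kpol' L F * F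

noncomputable def Gpol (L F : P2) : P2 := L * (dX F) ^ 2

/-- Condition 3 at the points P₅,…,P₁₆ :
A_Y(P) = L(P)·F_XY(P)², G_YY(P)/2 = L(P)·F_XY(P)², G_Y(P) = 0; hence
A_Y(P) = G_YY(P)/2 + F_YY(P)·G_Y(P)/(2·F_Y(P)) when F_Y(P) ≠ 0. -/
theorem condition3_at_FX_zeros (F L : P2)
    (P : Fin 2 → ℂ) (hFP : eval P F = 0) (hFXP : eval P (dX F) = 0) :
    eval P (dY (Apol L F)) = eval P L * (eval P (dY (dX F))) ^ 2 ∧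
    eval P (dY (dY (Gpol L F))) / 2 = eval P L * (eval P (dY (dX F))) ^ 2 ∧
    eval P (dY (Gpol L F)) = 0 ∧
    (eval P (dY F) ≠ 0 →
      eval P (dY (Apol L F)) =
        eval P (dY (dY (Gpol L F))) / 2 +
          eval P (dY (dY F)) * eval P (dY (Gpol L F)) / (2 * eval P (dY F))) := by

  have hFXP' : eval P ((pderiv (0:Fin 2)) F) = 0 := hFXP
  simp only [Apol, hpol, kpol, Gpol, dY, dX, sq, pderiv_mul, map_neg, map_add, map_mul,
    map_sub, eval_C, map_pow, hFP, hFXP', map_zero, mul_zero, zero_mul, add_zero, zero_add]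
  refine ⟨by ring, by ring, trivial, fun h => ?_⟩
  field_simp
  ring_nf
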